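/- Let (G, V^∞, T, k) be an instance of OddMultiwayNodeCut where G is a directed acyclic graph, T ⊆ V^∞ ⊆ V(G), and let Z ⊆ V(G) \ T. Let (G', V'^∞) := torso(G, V^∞, Z). Then the instance (G, V^∞, T, k) admits an odd multiway cut of size at most k that is disjoint from Z if and only if the instance (G', V'^∞, T, k) admits an odd multiway cut of size at most k. -/

import Mathlib

/-- A (simple) directed path in the directed graph `G`, represented as a nonempty
list of pairwise distinct vertices in which every consecutive pair is an edge of `G`. -/
def IsPath {V : Type*} (G : V → V → Prop) (p : List V) : Prop :=
  p ≠ [] ∧ p.Chain' G ∧ p.Nodup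

/-- `p` is a directed path from `u` to `v` in `G`. -/
def IsPathFrom {V : Type*} (G : V → V → Prop) (u v : V) (p : List V) : Prop :=
  IsPath G p ∧ p.head? = some u ∧ p.getLast? = some v

/-- The length (number of edges) of a path, given as its list of vertices. -/
def pathLen {V : Type*} (p : List V) : ℕ := p.length - 1

/-- The list of directed edges traversed by a path. -/
def edgesOf {V : Type*} (p : List V) : List (V × V) := p.zip p.tail

/-- A directed graph is acyclic (a DAG) if no vertex lies on a directed cycle. -/
def Acyclic {V : Type*} (G : V → V → Prop) : Prop :=
  ∀ v, ¬ Relation.TransGen G v v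

/-- The graph obtained from `G` by deleting the vertex set `M`. -/
def delV {V : Type*} (G : V → V → Prop) (M : Set V) : V → V → Prop :=
  fun a b => G a b ∧ a ∉ M ∧ b ∉ M

/-- All internal vertices of the path `p` (all vertices except the two endpoints)
lie in `Z`. -/
def internalsIn {V : Type*} (Z : Set V) (p : List V) : Prop :=
  ∀ x ∈ (p.drop 1).dropLast, x ∈ Z

/-- The parity-preserving torso of `G` with respect to `Z`.  Its vertices are
`Sum.inl v` for the original vertices `v ∈ V(G) \ Z`, together with new vertices
`Sum.inr (u, v)` playing the role of `x_{uv}`.  For every `u, v ∉ Z` joined in `G`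
by an odd path whose internal vertices all lie in `Z` there is an edge `u → v`
(this includes the edges of `G \ Z`, which are odd paths with no internal
vertices), and for every pair of distinct `u, v ∉ Z` joined in `G` by an even
path whose internal vertices all lie in `Z` there are edges `u → x_{uv} → v`. -/
def torsoGraph {V : Type*} (G : V → V → Prop) (Z : Set V) :
    V ⊕ V × V → V ⊕ V × V → Prop
  | Sum.inl u, Sum.inl v => u ∉ Z ∧ v ∉ Z ∧
      ∃ p, IsPathFrom G u v p ∧ Odd (pathLen p) ∧ internalsIn Z p
  | Sum.inl u, Sum.inr w => w.1 = u ∧ u ∉ Z ∧ w.2 ∉ Z ∧ u ≠ w.2 ∧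
      ∃ p, IsPathFrom G u w.2 p ∧ Even (pathLen p) ∧ internalsIn Z p
  | Sum.inr w, Sum.inl v => w.2 = v ∧ w.1 ∉ Z ∧ v ∉ Z ∧ w.1 ≠ v ∧
      ∃ p, IsPathFrom G w.1 v p ∧ Even (pathLen p) ∧ internalsIn Z p
  | Sum.inr _, Sum.inr _ => False

/-- The protected vertex set of the parity-preserving torso: the surviving old
protected vertices together with all the new vertices `x_{uv}`. -/
def torsoProtected {V : Type*} (Vinf Z : Set V) : Set (V ⊕ V × V) :=
  Sum.inl '' (Vinf \ Z) ∪ Set.range Sum.inr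

/-- An odd multiway (node) cut for the instance `(G, Vinf, T)`: a set of
non-protected vertices meeting every odd `T`-path of `G`. -/
def OddMWC {V : Type*} (G : V → V → Prop) (Vinf T M : Set V) : Prop :=
  M ⊆ Vinfᶜ ∧
  ∀ u ∈ T, ∀ v ∈ T, ∀ p, IsPathFrom G u v p → Odd (pathLen p) → ∃ z ∈ p, z ∈ M

/-! ### Auxiliary lemmas -/

lemma transGen_of_chain' {V : Type*} {G : V → V → Prop} {l : List V}
    (h : l.Chain' G) : ∀ (j i : ℕ) (hj : j < l.length) (hij : i < j),
    Relation.TransGen G (l.get ⟨i, by omega⟩) (l.get ⟨j, hj⟩) := by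
  intro j
  induction j with
  | zero => intro i hj hij; omega
  | succ j ihj =>
    intro i hj hij
    have hstep : G (l.get ⟨j, by omega⟩) (l.get ⟨j + 1, hj⟩) :=
      List.isChain_iff_getElem.mp h j (by omega)
    rcases Nat.lt_or_ge i j with h' | h'
    · exact (ihj i (by omega) h').tail hstep
    · have : i = j := by omega
      subst this
      exact Relation.TransGen.single hstep

lemma nodup_of_acyclic_chain' {V : Type*} {G : V → V → Prop} (hG : Acyclic G)
    {l : List V} (h : l.Chain' G) : l.Nodup := by
  rw [List.nodup_iff_injective_get]
  intro a b hab
  by_contra hne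
  have key : ∀ (i j : Fin l.length), i.1 < j.1 → l.get i = l.get j → False := by
    intro i j hij heq
    have h1 := transGen_of_chain' h j.1 i.1 j.2 hij
    have hi : (⟨i.1, by omega⟩ : Fin l.length) = i := rfl
    have hjj : (⟨j.1, j.2⟩ : Fin l.length) = j := rfl
    rw [hi, hjj, heq] at h1
    exact hG _ h1
  rcases Nat.lt_trichotomy a.1 b.1 with h' | h' | h'
  · exact key a b h' hab
  · exact hne (Fin.ext h')
  · exact key b a h' hab.symm

lemma path_append {V : Type*} {G : V → V → Prop} {q r : List V} {b : V}
    (hq : q.Chain' G) (hr : r.Chain' G) (hqb : q.getLast? = some b)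
    (hrb : r.head? = some b) :
    (q ++ r.tail).Chain' G ∧ (q ++ r.tail).head? = q.head? ∧
    (q ++ r.tail).getLast? = r.getLast? ∧
    pathLen (q ++ r.tail) = pathLen q + pathLen r := by
  have hqne : q ≠ [] := by rintro rfl; simp at hqb
  obtain ⟨t, rfl⟩ : ∃ t, r = b :: t := by
    cases r with
    | nil => simp at hrb
    | cons c t =>
      simp only [List.head?_cons, Option.some.injEq] at hrb
      exact ⟨t, by rw [hrb]⟩
  obtain ⟨hbt, hct⟩ := List.isChain_cons.mp hr
  refine ⟨?_, ?_, ?_, ?_⟩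
  · exact hq.append hct (by intro x hx y hy; rw [hqb] at hx; simp at hx; subst hx; exact hbt y hy)
  · cases q with
    | nil => exact absurd rfl hqne
    | cons a q' => simp
  · show (q ++ t).getLast? = (b :: t).getLast?
    cases t with
    | nil => simpa using hqb
    | cons c t' =>
      rw [List.getLast?_append_of_ne_nil q (by simp)]
      rw [show (b :: c :: t' : List V) = [b] ++ (c :: t') from rfl,
        List.getLast?_append_of_ne_nil [b] (by simp)]
  · have : 0 < q.length := List.length_pos_iff.mpr hqne
    simp only [pathLen, List.length_append, List.tail_cons, List.length_cons]
    omega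

lemma mem_path_cases {V : Type*} {l : List V} {u v x : V}
    (hu : l.head? = some u) (hv : l.getLast? = some v) (hx : x ∈ l) :
    x = u ∨ x = v ∨ x ∈ (l.drop 1).dropLast := by
  cases l with
  | nil => simp at hx
  | cons a m =>
    have ha : a = u := by simpa using hu
    rcases List.mem_cons.mp hx with rfl | hxm
    · exact Or.inl ha
    · right
      have hm : m ≠ [] := by rintro rfl; simp at hxm
      have hmv : m.getLast? = some v := by
        rw [show (a :: m : List V) = [a] ++ m from rfl,
          List.getLast?_append_of_ne_nil [a] hm] at hv
        exact hv
      have hgl : m.getLast hm = v := by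
        rw [List.getLast?_eq_getLast_of_ne_nil hm] at hmv
        exact Option.some.inj hmv
      have hsplit := List.dropLast_append_getLast hm
      rw [hgl] at hsplit
      rw [← hsplit] at hxm
      rcases List.mem_append.mp hxm with h | h
      · right; simpa using h
      · left; simpa using h

lemma expand_path {V : Type*} {G : V → V → Prop} {Z : Set V} :
    ∀ (n : ℕ) (p' : List (V ⊕ V × V)), p'.length ≤ n →
      p'.Chain' (torsoGraph G Z) →
      ∀ u v : V, p'.head? = some (Sum.inl u) → p'.getLast? = some (Sum.inl v) →
      ∃ p : List V, p.Chain' G ∧ p.head? = some u ∧ p.getLast? = some v ∧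
        pathLen p % 2 = pathLen p' % 2 ∧ ∀ x ∈ p, x ∈ Z ∨ Sum.inl x ∈ p' := by
  intro n
  induction n with
  | zero =>
    intro p' hlen _ u v hu _
    have : p' = [] := List.length_eq_zero_iff.mp (Nat.le_zero.mp hlen)
    subst this; simp at hu
  | succ n ih =>
    intro p' hlen hchain u v hu hv
    cases p' with
    | nil => simp at hu
    | cons a rest =>
      simp only [List.head?_cons, Option.some.injEq] at hu
      subst hu
      cases rest with
      | nil =>
        have huv : (Sum.inl u : V ⊕ V × V) = Sum.inl v := by simpa using hv
        have huv' : u = v := Sum.inl.inj huv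
        subst huv'
        exact ⟨[u], List.isChain_singleton _, by simp, by simp, by simp [pathLen], by simp⟩
      | cons y rest₂ =>
        cases y with
        | inl b =>
          have hedge : torsoGraph G Z (Sum.inl u) (Sum.inl b) :=
            (List.isChain_cons_cons.mp hchain).1
          obtain ⟨huZ, hbZ, q, ⟨⟨hqne, hqc, hqn⟩, hqh, hql⟩, hqodd, hqint⟩ := hedge
          have hrestl : (Sum.inl b :: rest₂ : List (V ⊕ V × V)).getLast? = some (Sum.inl v) := by
            rw [show (Sum.inl u :: Sum.inl b :: rest₂ : List (V ⊕ V × V))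
                = [Sum.inl u] ++ (Sum.inl b :: rest₂) from rfl,
              List.getLast?_append_of_ne_nil _ (by simp)] at hv
            exact hv
          obtain ⟨p₂, hc₂, hh₂, hl₂, hpar₂, hmem₂⟩ :=
            ih (Sum.inl b :: rest₂) (by simp at hlen ⊢; omega)
              (List.isChain_cons_cons.mp hchain).2 b v rfl hrestl
          obtain ⟨hcp, hhp, hlp, hlenp⟩ := path_append hqc hc₂ hql hh₂
          refine ⟨q ++ p₂.tail, hcp, by rw [hhp, hqh], by rw [hlp, hl₂], ?_, ?_⟩
          · have h1 : pathLen q % 2 = 1 := Nat.odd_iff.mp hqodd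
            have h2 : pathLen (Sum.inl u :: Sum.inl b :: rest₂) = rest₂.length + 1 := by
              simp [pathLen]
            have h3 : pathLen (Sum.inl b :: rest₂ : List (V ⊕ V × V)) = rest₂.length := by
              simp [pathLen]
            rw [hlenp, h2]
            rw [h3] at hpar₂
            omega
          · intro x hx
            rcases List.mem_append.mp hx with hxq | hxt
            · rcases mem_path_cases hqh hql hxq with rfl | rfl | hint
              · right; exact List.mem_cons_self
              · right; exact List.mem_cons_of_mem _ (List.mem_cons_self)
              · left; exact hqint x hint
            · rcases hmem₂ x (List.mem_of_mem_tail hxt) with h | h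
              · left; exact h
              · right; exact List.mem_cons_of_mem _ h
        | inr w =>
          have hedge : torsoGraph G Z (Sum.inl u) (Sum.inr w) :=
            (List.isChain_cons_cons.mp hchain).1
          obtain ⟨hw1, huZ, hw2Z, hne, q, ⟨⟨hqne, hqc, hqn⟩, hqh, hql⟩, hqeven, hqint⟩ := hedge
          cases rest₂ with
          | nil => simp [List.getLast?] at hv
          | cons c rest₃ =>
            have hedge2 : torsoGraph G Z (Sum.inr w) c :=
              (List.isChain_cons_cons.mp (List.isChain_cons_cons.mp hchain).2).1
            cases c with
            | inr w' => exact absurd hedge2 (by simp [torsoGraph])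
            | inl b =>
              have hb : w.2 = b := hedge2.1
              subst hb
              have hrestl : (Sum.inl w.2 :: rest₃ : List (V ⊕ V × V)).getLast?
                  = some (Sum.inl v) := by
                rw [show (Sum.inl u :: Sum.inr w :: Sum.inl w.2 :: rest₃ : List (V ⊕ V × V))
                    = [Sum.inl u, Sum.inr w] ++ (Sum.inl w.2 :: rest₃) from rfl,
                  List.getLast?_append_of_ne_nil _ (by simp)] at hv
                exact hv
              obtain ⟨p₂, hc₂, hh₂, hl₂, hpar₂, hmem₂⟩ :=
                ih (Sum.inl w.2 :: rest₃) (by simp at hlen ⊢; omega)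
                  (List.isChain_cons_cons.mp (List.isChain_cons_cons.mp hchain).2).2 w.2 v rfl hrestl
              obtain ⟨hcp, hhp, hlp, hlenp⟩ := path_append hqc hc₂ hql hh₂
              refine ⟨q ++ p₂.tail, hcp, by rw [hhp, hqh], by rw [hlp, hl₂], ?_, ?_⟩
              · have h1 : pathLen q % 2 = 0 := Nat.even_iff.mp hqeven
                have h2 : pathLen (Sum.inl u :: Sum.inr w :: Sum.inl w.2 :: rest₃)
                    = rest₃.length + 2 := by simp [pathLen]
                have h3 : pathLen (Sum.inl w.2 :: rest₃ : List (V ⊕ V × V))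
                    = rest₃.length := by simp [pathLen]
                rw [hlenp, h2]
                rw [h3] at hpar₂
                omega
              · intro x hx
                rcases List.mem_append.mp hx with hxq | hxt
                · rcases mem_path_cases hqh hql hxq with rfl | rfl | hint
                  · right; exact List.mem_cons_self
                  · right
                    exact List.mem_cons_of_mem _
                      (List.mem_cons_of_mem _ (List.mem_cons_self))
                  · left; exact hqint x hint
                · rcases hmem₂ x (List.mem_of_mem_tail hxt) with h | h
                  · left; exact h
                  · right
                    exact List.mem_cons_of_mem _ (List.mem_cons_of_mem _ h)

lemma contract_path {V : Type*} {G : V → V → Prop} {Z : Set V} :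
    ∀ (n : ℕ) (p : List V), p.length ≤ n → p.Chain' G → p.Nodup →
      ∀ u v : V, p.head? = some u → p.getLast? = some v → u ∉ Z → v ∉ Z →
      ∃ p' : List (V ⊕ V × V), p'.Chain' (torsoGraph G Z) ∧ p'.Nodup ∧
        p'.head? = some (Sum.inl u) ∧ p'.getLast? = some (Sum.inl v) ∧
        pathLen p' % 2 = pathLen p % 2 ∧
        (∀ x : V, Sum.inl x ∈ p' → x ∈ p ∧ x ∉ Z) ∧
        (∀ w : V × V, Sum.inr w ∈ p' → w.1 ∈ p) := by
  classical
  intro n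
  induction n with
  | zero =>
    intro p hlen _ _ u v hu _ _ _
    have : p = [] := List.length_eq_zero_iff.mp (Nat.le_zero.mp hlen)
    subst this; simp at hu
  | succ n ih =>
    intro p hlen hchain hnodup u v hu hv huZ hvZ
    cases p with
    | nil => simp at hu
    | cons a rest =>
      have ha : u = a := by
        have h' := hu
        simp only [List.head?_cons, Option.some.injEq] at h'
        exact h'.symm
      subst ha
      by_cases hr : rest = []
      · subst hr
        have huv : u = v := Option.some.inj (by simpa using hv)
        subst huv
        refine ⟨[Sum.inl u], List.isChain_singleton _, by simp, rfl, rfl, rfl, ?_, by simp⟩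
        intro x hx
        simp only [List.mem_singleton, Sum.inl.injEq] at hx
        subst hx
        exact ⟨List.mem_cons_self, huZ⟩
      · have hrestl : rest.getLast? = some v := by
          rw [show (u :: rest : List V) = [u] ++ rest from rfl,
            List.getLast?_append_of_ne_nil [u] hr] at hv
          exact hv
        have hvrest : v ∈ rest := by
          obtain ⟨h1, h2⟩ := List.mem_getLast?_eq_getLast hrestl
          exact h2 ▸ List.getLast_mem h1
        have hsd0 : rest.takeWhile (fun x => decide (x ∈ Z)) ++
            rest.dropWhile (fun x => decide (x ∈ Z)) = rest :=
          List.takeWhile_append_dropWhile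
        have hsZ : ∀ x ∈ rest.takeWhile (fun x => decide (x ∈ Z)), x ∈ Z := by
          intro x hx
          simpa using List.mem_takeWhile_imp hx
        have hdne : rest.dropWhile (fun x => decide (x ∈ Z)) ≠ [] := by
          intro h0
          apply hvZ
          apply hsZ
          rw [← hsd0, h0, List.append_nil] at hvrest
          exact hvrest
        obtain ⟨b, t, hbt⟩ : ∃ b t, rest.dropWhile (fun x => decide (x ∈ Z)) = b :: t := by
          cases h : rest.dropWhile (fun x => decide (x ∈ Z)) with
          | nil => exact absurd h hdne
          | cons b t => exact ⟨b, t, rfl⟩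
        have h0' : 0 < (rest.dropWhile (fun x => decide (x ∈ Z))).length := by
          rw [hbt]; simp
        have hbZ : b ∉ Z := by
          intro hmem
          have h1 := List.dropWhile_get_zero_not (p := fun x => decide (x ∈ Z)) rest h0'
          have h2 : (rest.dropWhile (fun x => decide (x ∈ Z))).get ⟨0, h0'⟩ = b :=
            (List.get_of_eq hbt ⟨0, h0'⟩).trans rfl
          apply h1
          rw [h2]
          simpa using hmem
        set s := rest.takeWhile (fun x => decide (x ∈ Z)) with hs
        have hsd : s ++ (b :: t) = rest := by rw [hs, ← hbt]; exact hsd0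
        -- p = u :: s ++ b :: t
        have hurest : u ∉ rest := (List.nodup_cons.mp hnodup).1
        have hbt_suffix₀ : (b :: t) <:+ rest := ⟨s, hsd⟩
        have hbt_subr : ∀ x ∈ (b :: t : List V), x ∈ rest :=
          fun x hx => hbt_suffix₀.sublist.subset hx
        have hbt_suffix : (b :: t) <:+ (u :: rest) :=
          ⟨u :: s, by rw [← hsd]; rfl⟩
        have hubt : u ∉ (b :: t : List V) := fun hmem => hurest (hbt_subr u hmem)
        have hub : u ≠ b := fun h => hubt (h ▸ List.mem_cons_self)
        -- the segment q
        set q : List V := u :: (s ++ [b]) with hq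
        have hqpre : q ++ t = u :: rest := by
          rw [hq, ← hsd]; simp
        have hqprefix : q <+: (u :: rest) := ⟨t, hqpre⟩
        have hqc : q.Chain' G := hchain.prefix hqprefix
        have hqn : q.Nodup := hnodup.sublist hqprefix.sublist
        have hql : q.getLast? = some b := by
          rw [hq, show (u :: (s ++ [b]) : List V) = (u :: s) ++ [b] from by simp]
          exact List.getLast?_concat
        have hqpath : IsPathFrom G u b q :=
          ⟨⟨by simp [hq], hqc, hqn⟩, by simp [hq], hql⟩
        have hqint : internalsIn Z q := by
          intro x hx
          apply hsZ
          simpa [hq, List.dropLast_concat] using hx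
        have hqlen : pathLen q = s.length + 1 := by simp [hq, pathLen]
        -- recurse on b :: t
        have hbtc : (b :: t : List V).Chain' G := hchain.suffix hbt_suffix
        have hbtn : (b :: t : List V).Nodup := hnodup.sublist hbt_suffix.sublist
        have hbtl : (b :: t : List V).getLast? = some v := by
          rw [show (u :: rest : List V) = (u :: s) ++ (b :: t) from by rw [← hsd]; rfl,
            List.getLast?_append_of_ne_nil _ (by simp)] at hv
          exact hv
        have hlen' : (b :: t : List V).length ≤ n := by
          have h1 : (u :: rest : List V).length ≤ n + 1 := hlen
          have h2 : rest.length = s.length + t.length + 1 := by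
            rw [← hsd]; simp [List.length_append]; omega
          simp only [List.length_cons] at h1 ⊢
          omega
        obtain ⟨p'', hc'', hn'', hh'', hl'', hpar'', hmeml'', hmemr''⟩ :=
          ih (b :: t) hlen' hbtc hbtn b v rfl hbtl hbZ hvZ
        have hp''ne : p'' ≠ [] := by rintro rfl; simp at hh''
        have hmem_to_p : ∀ x ∈ (b :: t : List V), x ∈ (u :: rest : List V) :=
          fun x hx => List.mem_cons_of_mem _ (hbt_subr x hx)
        have hplen : pathLen (u :: rest) = s.length + 1 + t.length := by
          have h2 : rest.length = s.length + t.length + 1 := by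
            rw [← hsd]; simp [List.length_append]; omega
          simp only [pathLen, List.length_cons, h2]
          omega
        have hbtplen : pathLen (b :: t : List V) = t.length := by simp [pathLen]
        rw [hbtplen] at hpar''
        have hp''len : pathLen p'' = p''.length - 1 := rfl
        rcases Nat.even_or_odd s.length with hpar | hpar
        · -- odd segment: direct edge inl u → inl b
          have hqodd : Odd (pathLen q) := by
            rw [hqlen, Nat.odd_iff]
            have := Nat.even_iff.mp hpar
            omega
          have hedge : torsoGraph G Z (Sum.inl u) (Sum.inl b) :=
            ⟨huZ, hbZ, q, hqpath, hqodd, hqint⟩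
          refine ⟨Sum.inl u :: p'', ?_, ?_, rfl, ?_, ?_, ?_, ?_⟩
          · refine List.isChain_cons.mpr ⟨?_, hc''⟩
            intro y hy
            rw [hh''] at hy
            simp only [Option.mem_def, Option.some.injEq] at hy
            subst hy
            exact hedge
          · refine List.nodup_cons.mpr ⟨?_, hn''⟩
            intro hmem
            exact hubt (hmeml'' u hmem).1
          · rw [show (Sum.inl u :: p'' : List (V ⊕ V × V)) = [Sum.inl u] ++ p'' from rfl,
              List.getLast?_append_of_ne_nil _ hp''ne]
            exact hl''
          · have : pathLen (Sum.inl u :: p'') = p''.length := by simp [pathLen]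
            rw [this, hplen]
            have hple : p''.length ≥ 1 := List.length_pos_iff.mpr hp''ne
            have hse : s.length % 2 = 0 := Nat.even_iff.mp hpar
            rw [hp''len] at hpar''
            omega
          · intro x hx
            rcases List.mem_cons.mp hx with h | h
            · have : x = u := Sum.inl.inj h
              subst this
              exact ⟨List.mem_cons_self, huZ⟩
            · obtain ⟨h1, h2⟩ := hmeml'' x h
              exact ⟨hmem_to_p x h1, h2⟩
          · intro w hw
            rcases List.mem_cons.mp hw with h | h
            · exact absurd h (by simp)
            · exact hmem_to_p _ (hmemr'' w h)
        · -- even segment: edges through inr (u, b)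
          have hqeven : Even (pathLen q) := by
            rw [hqlen]
            exact Nat.even_iff.mpr (by have := Nat.odd_iff.mp hpar; omega)
          have hedge1 : torsoGraph G Z (Sum.inl u) (Sum.inr (u, b)) :=
            ⟨rfl, huZ, hbZ, hub, q, hqpath, hqeven, hqint⟩
          have hedge2 : torsoGraph G Z (Sum.inr (u, b)) (Sum.inl b) :=
            ⟨rfl, huZ, hbZ, hub, q, hqpath, hqeven, hqint⟩
          refine ⟨Sum.inl u :: Sum.inr (u, b) :: p'', ?_, ?_, rfl, ?_, ?_, ?_, ?_⟩
          · refine List.isChain_cons_cons.mpr ⟨hedge1, ?_⟩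
            refine List.isChain_cons.mpr ⟨?_, hc''⟩
            intro y hy
            rw [hh''] at hy
            simp only [Option.mem_def, Option.some.injEq] at hy
            subst hy
            exact hedge2
          · refine List.nodup_cons.mpr ⟨?_, List.nodup_cons.mpr ⟨?_, hn''⟩⟩
            · intro hmem
              rcases List.mem_cons.mp hmem with h | h
              · exact absurd h (by simp)
              · exact hubt (hmeml'' u h).1
            · intro hmem
              have := hmemr'' (u, b) hmem
              exact hubt this
          · rw [show (Sum.inl u :: Sum.inr (u, b) :: p'' : List (V ⊕ V × V))
                = [Sum.inl u, Sum.inr (u, b)] ++ p'' from rfl,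
              List.getLast?_append_of_ne_nil _ hp''ne]
            exact hl''
          · have : pathLen (Sum.inl u :: Sum.inr (u, b) :: p'') = p''.length + 1 := by
              simp [pathLen]
            rw [this, hplen]
            have hple : p''.length ≥ 1 := List.length_pos_iff.mpr hp''ne
            have hse : s.length % 2 = 1 := Nat.odd_iff.mp hpar
            rw [hp''len] at hpar''
            omega
          · intro x hx
            rcases List.mem_cons.mp hx with h | h
            · have : x = u := Sum.inl.inj h
              subst this
              exact ⟨List.mem_cons_self, huZ⟩
            · rcases List.mem_cons.mp h with h' | h'
              · exact absurd h' (by simp)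
              · obtain ⟨h1, h2⟩ := hmeml'' x h'
                exact ⟨hmem_to_p x h1, h2⟩
          · intro w hw
            rcases List.mem_cons.mp hw with h | h
            · exact absurd h (by simp)
            · rcases List.mem_cons.mp h with h' | h'
              · have : w = (u, b) := Sum.inr.inj h'
                subst this
                exact List.mem_cons_self
              · exact hmem_to_p _ (hmemr'' w h')

/-- **Corollary (solutions survive the torso operation).**
Let `(G, Vinf, T, k)` be an instance of OddMultiwayNodeCut with `G` a DAG and
`T ⊆ Vinf`, and let `Z ⊆ V(G) \ T`.  Let `(G', Vinf') = torso(G, Vinf, Z)`.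
Then `(G, Vinf, T, k)` admits an odd multiway cut of size at most `k` disjoint
from `Z` iff the torso instance `(G', Vinf', T, k)` admits an odd multiway cut
of size at most `k`. -/
theorem torso_solution_equiv {V : Type*} [Fintype V] (G : V → V → Prop)
    (hG : Acyclic G) (Vinf T Z : Set V) (hT : T ⊆ Vinf) (hZ : Z ⊆ Tᶜ) (k : ℕ) :
    (∃ M : Set V, OddMWC G Vinf T M ∧ Disjoint M Z ∧ M.ncard ≤ k) ↔
    (∃ M' : Set (V ⊕ V × V),
      OddMWC (torsoGraph G Z) (torsoProtected Vinf Z) (Sum.inl '' T) M' ∧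
      M'.ncard ≤ k) := by
  classical
  constructor
  · rintro ⟨M, ⟨hMsub, hMhit⟩, hMZ, hMk⟩
    refine ⟨Sum.inl '' M, ⟨?_, ?_⟩, ?_⟩
    · rintro x ⟨m, hm, rfl⟩ hx
      rcases hx with ⟨y, hy, hxy⟩ | ⟨w, hw⟩
      · have : y = m := Sum.inl.inj hxy
        subst this
        exact hMsub hm hy.1
      · exact absurd hw (by simp)
    · rintro u' ⟨u, hu, rfl⟩ v' ⟨v, hv, rfl⟩ p' ⟨⟨hne, hch, hnd⟩, hh, hl⟩ hodd
      obtain ⟨p, hpc, hph, hpl, hpar, hpmem⟩ := expand_path p'.length p' le_rfl hch u v hh hl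
      have hpne : p ≠ [] := by rintro rfl; simp at hph
      obtain ⟨z, hzp, hzM⟩ := hMhit u hu v hv p
        ⟨⟨hpne, hpc, nodup_of_acyclic_chain' hG hpc⟩, hph, hpl⟩
        (Nat.odd_iff.mpr (by rw [hpar]; exact Nat.odd_iff.mp hodd))
      have hzZ : z ∉ Z := Set.disjoint_left.mp hMZ hzM
      rcases hpmem z hzp with h | h
      · exact absurd h hzZ
      · exact ⟨Sum.inl z, h, ⟨z, hzM, rfl⟩⟩
    · rw [Set.ncard_image_of_injective _ Sum.inl_injective]; exact hMk
  · rintro ⟨M', ⟨hM'sub, hM'hit⟩, hM'k⟩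
    refine ⟨{x | Sum.inl x ∈ M' ∧ x ∉ Z}, ⟨?_, ?_⟩, ?_, ?_⟩
    · rintro x ⟨hx, hxZ⟩ hxV
      exact hM'sub hx (Or.inl ⟨x, ⟨hxV, hxZ⟩, rfl⟩)
    · rintro u hu v hv p ⟨⟨hne, hch, hnd⟩, hh, hl⟩ hodd
      have huZ : u ∉ Z := fun h => hZ h hu
      have hvZ : v ∉ Z := fun h => hZ h hv
      obtain ⟨p', hc', hn', hh', hl', hpar', hmeml, hmemr⟩ :=
        contract_path p.length p le_rfl hch hnd u v hh hl huZ hvZ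
      have hp'ne : p' ≠ [] := by rintro rfl; simp at hh'
      obtain ⟨z', hz'p, hz'M⟩ := hM'hit _ ⟨u, hu, rfl⟩ _ ⟨v, hv, rfl⟩ p'
        ⟨⟨hp'ne, hc', hn'⟩, hh', hl'⟩
        (Nat.odd_iff.mpr (by rw [hpar']; exact Nat.odd_iff.mp hodd))
      cases z' with
      | inr w => exact absurd (Or.inr ⟨w, rfl⟩) (hM'sub hz'M)
      | inl x =>
        obtain ⟨hxp, hxZ⟩ := hmeml x hz'p
        exact ⟨x, hxp, hz'M, hxZ⟩
    · exact Set.disjoint_left.mpr (fun x hx => hx.2)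
    · rw [← Set.ncard_image_of_injective _ Sum.inl_injective]
      refine le_trans (Set.ncard_le_ncard ?_ (Set.toFinite _)) hM'k
      rintro _ ⟨x, ⟨h, _⟩, rfl⟩
      exact h
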